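/- Let G be a finite group acting transitively on a finite set Ω with point stabilizer H = G_α for some α ∈ Ω. Let x ∈ H have prime order and set K = ⟨x⟩. Then x is quasi-semiregular on Ω if and only if both: (i) N_G(K) = N_H(K) (i.e., N_G(K) ≤ H), and (ii) for every g ∈ G with g K g⁻¹ ≤ H there exists h ∈ H with g K g⁻¹ = h K h⁻¹ (every G-conjugate of K contained in H is H-conjugate to K). -/

import Mathlib

/-- An element `x` of a group `G` acting on `Ω` is *quasi-semiregular* if the cyclic group
`⟨x⟩` has a unique fixed point on `Ω` and acts semiregularly on the remaining points. -/
def IsQuasiSemiregular (G : Type*) [Group G] (Ω : Type*) [MulAction G Ω] (x : G) : Prop :=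
  ∃ α : Ω, (∀ β : Ω, x • β = β ↔ β = α) ∧
    ∀ (n : ℤ) (β : Ω), β ≠ α → x ^ n • β = β → ∀ γ : Ω, x ^ n • γ = γ

/-- The conjugate `g K g⁻¹` of a subgroup `K` by the element `g`. -/
def conjSubgroup {G : Type*} [Group G] (g : G) (K : Subgroup G) : Subgroup G :=
  K.map (MulAut.conj g).toMonoidHom

private lemma conj_zpowers {G : Type*} [Group G] (g y : G) :
    conjSubgroup g (Subgroup.zpowers y) = Subgroup.zpowers (g * y * g⁻¹) := by
  rw [conjSubgroup, MonoidHom.map_zpowers]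
  rfl

/-- any non-identity element of a cyclic group of prime order generates it. -/
private lemma zpowers_eq_of_prime {G : Type*} [Group G] [Finite G] {x y : G}
    (hord : (orderOf x).Prime) (hy : y ∈ Subgroup.zpowers x) (hy1 : y ≠ 1) :
    Subgroup.zpowers y = Subgroup.zpowers x := by
  have hle : Subgroup.zpowers y ≤ Subgroup.zpowers x := Subgroup.zpowers_le.mpr hy
  have hdvd : orderOf y ∣ orderOf x := orderOf_dvd_of_mem_zpowers hy
  have h1 : orderOf y ≠ 1 := by
    simpa [orderOf_eq_one_iff] using hy1
  have hcard : orderOf y = orderOf x :=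
    ((Nat.Prime.eq_one_or_self_of_dvd hord _ hdvd).resolve_left h1)
  exact Subgroup.eq_of_le_of_card_ge hle
    (by rw [Nat.card_zpowers, Nat.card_zpowers, hcard])

private lemma mem_normalizer_of_conj_eq {G : Type*} [Group G] {a : G} {K : Subgroup G}
    (heq : conjSubgroup a K = K) : a ∈ Subgroup.normalizer (K : Set G) := by
  rw [Subgroup.mem_normalizer_iff]
  intro n
  constructor
  · intro hn
    rw [← heq]
    exact Subgroup.mem_map.mpr ⟨n, hn, rfl⟩
  · intro hn
    rw [← heq] at hn
    rcases Subgroup.mem_map.mp hn with ⟨k, hk, hke⟩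
    have hke' : a * k * a⁻¹ = a * n * a⁻¹ := hke
    have : k = n := mul_left_cancel (mul_right_cancel hke')
    rwa [← this]

private lemma key {G Ω : Type*} [Group G] [Finite G] [Finite Ω] [MulAction G Ω]
    (htrans : MulAction.IsPretransitive G Ω) (α : Ω)
    (H : Subgroup G) (hH : H = MulAction.stabilizer G α)
    (x : G) (hord : (orderOf x).Prime)
    (hN : Subgroup.normalizer (Subgroup.zpowers x : Set G) ≤ H)
    (hC : ∀ g : G, conjSubgroup g (Subgroup.zpowers x) ≤ H →
          ∃ h ∈ H, conjSubgroup h (Subgroup.zpowers x) =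
            conjSubgroup g (Subgroup.zpowers x))
    (y : G) (hy : y ∈ Subgroup.zpowers x) (hy1 : y ≠ 1)
    (β : Ω) (hβ : y • β = β) : β = α := by
  obtain ⟨g, hg⟩ := htrans.exists_smul_eq α β
  have hzy : Subgroup.zpowers y = Subgroup.zpowers x := zpowers_eq_of_prime hord hy hy1
  have hstab : g⁻¹ * y * g ∈ MulAction.stabilizer G α := by
    have : (g⁻¹ * y * g) • α = α := by
      rw [mul_smul, mul_smul, hg, hβ, inv_smul_eq_iff, hg]
    exact this
  have hle : conjSubgroup g⁻¹ (Subgroup.zpowers x) ≤ H := by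
    rw [← hzy, conj_zpowers, inv_inv, Subgroup.zpowers_le, hH]
    exact hstab
  obtain ⟨h, hhH, hconj⟩ := hC g⁻¹ hle
  -- conjSubgroup (g * h) (zpowers x) = zpowers x
  have heq : conjSubgroup (g * h) (Subgroup.zpowers x) = Subgroup.zpowers x := by
    have h1 : conjSubgroup g (conjSubgroup h (Subgroup.zpowers x)) =
        conjSubgroup (g * h) (Subgroup.zpowers x) := by
      rw [conj_zpowers, conj_zpowers, conj_zpowers]
      congr 1
      group
    have h2 : conjSubgroup g (conjSubgroup g⁻¹ (Subgroup.zpowers x)) =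
        Subgroup.zpowers x := by
      rw [conj_zpowers, conj_zpowers]
      congr 1
      group
    rw [← h1, hconj, h2]
  have hnorm : g * h ∈ Subgroup.normalizer (Subgroup.zpowers x : Set G) :=
    mem_normalizer_of_conj_eq heq
  have hgH : g ∈ H := by
    have := hN hnorm
    have hginv : g = (g * h) * h⁻¹ := by group
    rw [hginv]
    exact H.mul_mem this (H.inv_mem hhH)
  rw [hH] at hgH
  rw [← hg, hgH]

theorem stmt6 {G Ω : Type*} [Group G] [Finite G] [Finite Ω] [MulAction G Ω]
    (htrans : MulAction.IsPretransitive G Ω) (α : Ω)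
    (H : Subgroup G) (hH : H = MulAction.stabilizer G α)
    (x : G) (hx : x ∈ H) (hord : (orderOf x).Prime) :
    IsQuasiSemiregular G Ω x ↔
      (Subgroup.normalizer (Subgroup.zpowers x : Set G) ≤ H ∧
        ∀ g : G, conjSubgroup g (Subgroup.zpowers x) ≤ H →
          ∃ h ∈ H, conjSubgroup h (Subgroup.zpowers x) =
            conjSubgroup g (Subgroup.zpowers x)) := by
  have hxα : x • α = α := by rw [hH] at hx; exact hx
  constructor
  · rintro ⟨α', hfix, -⟩
    have hαα' : α = α' := (hfix α).mp hxα
    subst hαα'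
    constructor
    · intro g hg
      rw [Subgroup.mem_normalizer_iff''] at hg
      have hxg : g⁻¹ * x * g ∈ Subgroup.zpowers x := (hg x).mp (Subgroup.mem_zpowers x)
      have hstab : (g⁻¹ * x * g) • α = α := by
        rcases Subgroup.mem_zpowers_iff.mp hxg with ⟨k, hk⟩
        rw [← hk]
        have : x ∈ MulAction.stabilizer G α := hxα
        exact (MulAction.stabilizer G α).zpow_mem this k
      have : x • g • α = g • α := by
        calc x • g • α = g • (g⁻¹ * x * g) • α := by simp [mul_smul]
          _ = g • α := by rw [hstab]
      rw [hH]
      exact (hfix _).mp this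
    · intro g hg
      have hxin : g * x * g⁻¹ ∈ H := by
        apply hg
        rw [conj_zpowers]
        exact Subgroup.mem_zpowers _
      rw [hH] at hxin
      have : x • g⁻¹ • α = g⁻¹ • α := by
        have hst : (g * x * g⁻¹) • α = α := hxin
        calc x • g⁻¹ • α = g⁻¹ • (g * x * g⁻¹) • α := by simp [mul_smul]
          _ = g⁻¹ • α := by rw [hst]
      have hgα : g⁻¹ • α = α := (hfix _).mp this
      have hgH : g ∈ H := by
        rw [hH]
        have : g⁻¹ ∈ MulAction.stabilizer G α := hgα
        simpa using (MulAction.stabilizer G α).inv_mem this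
      exact ⟨g, hgH, rfl⟩
  · rintro ⟨hN, hC⟩
    have hx1 : x ≠ 1 := by
      intro h
      rw [h, orderOf_one] at hord
      exact Nat.not_prime_one hord
    refine ⟨α, fun β => ⟨fun hβ => key htrans α H hH x hord hN hC x
      (Subgroup.mem_zpowers x) hx1 β hβ, fun hβ => by rw [hβ]; exact hxα⟩, ?_⟩
    intro n β hβ hfixn γ
    by_cases hxn : x ^ n = 1
    · rw [hxn, one_smul]
    · exact absurd (key htrans α H hH x hord hN hC (x ^ n)
        (Subgroup.zpow_mem _ (Subgroup.mem_zpowers x) n) hxn β hfixn) hβ
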